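/- Let (α_k)_{k≥1} and (β_k)_{k≥1} be summable sequences of real numbers satisfying 0 ≤ α_k ≤ 1/2 for all k, ∑_{k=1}^∞ α_k = 1, 0 ≤ β_k ≤ 1/(2k+1) for all k, and ∑_{k=1}^∞ β_k ≤ 1. Then ∑_{k=1}^∞ ( α_k β_k + (1/2) α_k (1 − ∑_{j=k}^∞ β_j) ) ≤ 7/12, and this bound is attained for α_1 = α_2 = 1/2, α_k = 0 for k ≥ 3, β_1 = 1/3 and β_k = 0 for k ≥ 2. -/

import Mathlib

private lemma qp_aux (α β T : ℕ+ → ℝ) (hαs : Summable α) (hβs : Summable β)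
    (hα0 : ∀ k : ℕ+, 0 ≤ α k) (hα2 : ∀ k : ℕ+, α k ≤ 1 / 2)
    (hαtot : (∑' k : ℕ+, α k) = 1)
    (hβ0 : ∀ k : ℕ+, 0 ≤ β k) (hβbd : ∀ k : ℕ+, β k ≤ 1 / (2 * ((k : ℕ) : ℝ) + 1))
    (hβtot : (∑' k : ℕ+, β k) ≤ 1)
    (hT : ∀ k : ℕ+, T k = ∑' j : {j : ℕ+ // k ≤ j}, β (j : ℕ+)) :
    (∑' k : ℕ+, (α k * β k + 1 / 2 * α k * (1 - T k))) ≤ 7 / 12 := by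
  have hTs : ∀ k : ℕ+, Summable (fun j : {j : ℕ+ // k ≤ j} => β (j : ℕ+)) :=
    fun k => hβs.subtype _
  have hβ3 : ∀ k : ℕ+, β k ≤ 1 / 3 := by
    intro k
    refine (hβbd k).trans ?_
    have hk : (1 : ℝ) ≤ ((k : ℕ) : ℝ) := by exact_mod_cast k.one_le
    rw [div_le_div_iff₀ (by linarith) (by norm_num)]
    linarith
  have hsingle : ∀ k l : ℕ+, k ≤ l → β l ≤ T k := by
    intro k l hkl
    rw [hT k]
    have := Summable.le_tsum (hTs k) ⟨l, hkl⟩ (fun j _ => hβ0 _)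
    simpa using this
  have hpairT : ∀ k l : ℕ+, k < l → β k + β l ≤ T k := by
    intro k l hkl
    rw [hT k]
    have hne : (⟨k, le_refl k⟩ : {j : ℕ+ // k ≤ j}) ≠ ⟨l, le_of_lt hkl⟩ := by
      intro h
      exact absurd (congrArg Subtype.val h) (ne_of_lt hkl)
    have hle := Summable.sum_le_tsum ({⟨k, le_refl k⟩, ⟨l, le_of_lt hkl⟩} : Finset {j : ℕ+ // k ≤ j})
      (fun j _ => hβ0 _) (hTs k)
    rwa [Finset.sum_pair hne] at hle
  set d : ℕ+ → ℝ := fun k => β k - T k / 2 with hd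
  have hT0 : ∀ k, 0 ≤ T k := by
    intro k; rw [hT k]; exact tsum_nonneg (fun j => hβ0 _)
  have hT1 : ∀ k, T k ≤ 1 := by
    intro k
    rw [hT k]
    refine le_trans ?_ hβtot
    exact Summable.tsum_subtype_le β {j : ℕ+ | k ≤ j} hβ0 hβs
  have hd_le : ∀ k, d k ≤ 1 / 3 := by
    intro k; have h1 := hβ3 k; have h2 := hT0 k; simp only [hd]; linarith
  have hd_ge : ∀ k, -(1 / 2) ≤ d k := by
    intro k; have h1 := hβ0 k; have h2 := hT1 k; simp only [hd]; linarith
  have hαd : Summable (fun k => α k * d k) := by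
    apply Summable.of_abs
    apply Summable.of_nonneg_of_le (fun k => abs_nonneg _) (fun k => ?_) (hαs.mul_right (1 / 2))
    rw [abs_mul, abs_of_nonneg (hα0 k)]
    refine mul_le_mul_of_nonneg_left ?_ (hα0 k)
    rw [abs_le]
    exact ⟨by linarith [hd_ge k], by linarith [hd_le k]⟩
  have hpaird : ∀ k l : ℕ+, k ≠ l → d k + d l ≤ 1 / 6 := by
    intro k l hkl
    rcases lt_or_gt_of_ne hkl with h | h
    · have h1 := hpairT k l h
      have h2 := hsingle l l le_rfl
      have h3 := hβ3 k
      simp only [hd]; linarith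
    · have h1 := hpairT l k h
      have h2 := hsingle k k le_rfl
      have h3 := hβ3 l
      simp only [hd]; linarith
  have hobj : (∑' k : ℕ+, (α k * β k + 1 / 2 * α k * (1 - T k)))
      = 1 / 2 + ∑' k, α k * d k := by
    have h1 : ∀ k : ℕ+, α k * β k + 1 / 2 * α k * (1 - T k)
        = 1 / 2 * α k + α k * d k := by
      intro k; simp only [hd]; ring
    rw [tsum_congr h1, Summable.tsum_add (hαs.mul_left (1 / 2)) hαd, tsum_mul_left, hαtot]
    ring
  rw [hobj]
  have key : (∑' k, α k * d k) ≤ 1 / 12 := by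
    by_cases h : ∀ k, d k ≤ 1 / 12
    · calc ∑' k, α k * d k ≤ ∑' k, α k * (1 / 12) :=
          Summable.tsum_le_tsum (fun k => mul_le_mul_of_nonneg_left (h k) (hα0 k)) hαd (hαs.mul_right _)
        _ = 1 / 12 := by rw [tsum_mul_right, hαtot, one_mul]
    · push_neg at h
      obtain ⟨m, hm⟩ := h
      have hbound : ∀ k, α k * d k
          ≤ α k * (1 / 6 - d m) + (if k = m then α m * (2 * d m - 1 / 6) else 0) := by
        intro k
        by_cases hk : k = m
        · subst hk
          exact le_of_eq (by rw [if_pos rfl]; ring)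
        · simp only [if_neg hk, add_zero]
          have hp := hpaird k m hk
          have := hα0 k
          nlinarith
      have hs2 : Summable (fun k : ℕ+ => if k = m then α m * (2 * d m - 1 / 6) else 0) :=
        summable_of_ne_finset_zero (s := {m}) (by
          intro b hb
          simp only [Finset.mem_singleton] at hb
          simp [hb])
      calc ∑' k, α k * d k
          ≤ ∑' k, (α k * (1 / 6 - d m) + (if k = m then α m * (2 * d m - 1 / 6) else 0)) :=
            Summable.tsum_le_tsum hbound hαd ((hαs.mul_right _).add hs2)
        _ = (∑' k, α k) * (1 / 6 - d m) + α m * (2 * d m - 1 / 6) := by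
            rw [Summable.tsum_add (hαs.mul_right _) hs2, tsum_mul_right, tsum_ite_eq]
        _ ≤ 1 / 12 := by
            rw [hαtot, one_mul]
            nlinarith [hα2 m]
  linarith

theorem quadratic_program_value :
    (∀ α β : ℕ+ → ℝ, Summable α → Summable β →
      (∀ k : ℕ+, 0 ≤ α k) → (∀ k : ℕ+, α k ≤ 1 / 2) →
      (∑' k : ℕ+, α k) = 1 →
      (∀ k : ℕ+, 0 ≤ β k) → (∀ k : ℕ+, β k ≤ 1 / (2 * ((k : ℕ) : ℝ) + 1)) →
      (∑' k : ℕ+, β k) ≤ 1 →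
      (∑' k : ℕ+, (α k * β k +
          1 / 2 * α k * (1 - ∑' j : {j : ℕ+ // k ≤ j}, β (j : ℕ+)))) ≤ 7 / 12) ∧
    (∑' k : ℕ+,
        ((fun m : ℕ+ => if m ≤ 2 then (1 : ℝ) / 2 else 0) k *
            (fun m : ℕ+ => if m = 1 then (1 : ℝ) / 3 else 0) k +
          1 / 2 * (fun m : ℕ+ => if m ≤ 2 then (1 : ℝ) / 2 else 0) k *
            (1 - ∑' j : {j : ℕ+ // k ≤ j},
              (fun m : ℕ+ => if m = 1 then (1 : ℝ) / 3 else 0) (j : ℕ+))))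
      = 7 / 12 := by
  constructor
  · intro α β hαs hβs hα0 hα2 hαtot hβ0 hβbd hβtot
    exact qp_aux α β (fun k => ∑' j : {j : ℕ+ // k ≤ j}, β (j : ℕ+))
      hαs hβs hα0 hα2 hαtot hβ0 hβbd hβtot (fun k => rfl)
  · have hsupp : ∀ k : ℕ+, k ∉ ({1, 2} : Finset ℕ+) →
        ((fun m : ℕ+ => if m ≤ 2 then (1 : ℝ) / 2 else 0) k *
            (fun m : ℕ+ => if m = 1 then (1 : ℝ) / 3 else 0) k +
          1 / 2 * (fun m : ℕ+ => if m ≤ 2 then (1 : ℝ) / 2 else 0) k *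
            (1 - ∑' j : {j : ℕ+ // k ≤ j},
              (fun m : ℕ+ => if m = 1 then (1 : ℝ) / 3 else 0) (j : ℕ+))) = 0 := by
      intro k hk
      simp only [Finset.mem_insert, Finset.mem_singleton] at hk
      push_neg at hk
      have hk2 : ¬ (k ≤ 2) := by
        intro hle
        have h1 : (1 : ℕ) ≤ (k : ℕ) := k.one_le
        have h2 : (k : ℕ) ≤ 2 := by exact_mod_cast hle
        have h3 : (k : ℕ) = 1 ∨ (k : ℕ) = 2 := by omega
        rcases h3 with h | h
        · exact hk.1 (by exact_mod_cast h)
        · exact hk.2 (by exact_mod_cast h)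
      simp [hk2]
    rw [tsum_eq_sum hsupp]
    have hT1 : (∑' j : {j : ℕ+ // (1 : ℕ+) ≤ j},
        (fun m : ℕ+ => if m = 1 then (1 : ℝ) / 3 else 0) (j : ℕ+)) = 1 / 3 := by
      have := tsum_eq_single (L := SummationFilter.unconditional _) (f := fun j : {j : ℕ+ // (1 : ℕ+) ≤ j} =>
          (fun m : ℕ+ => if m = 1 then (1 : ℝ) / 3 else 0) (j : ℕ+))
        ⟨1, le_refl 1⟩ (by
          intro b hb
          have : (b : ℕ+) ≠ 1 := fun h => hb (Subtype.ext h)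
          simp [this])
      simpa using this
    have hT2 : (∑' j : {j : ℕ+ // (2 : ℕ+) ≤ j},
        (fun m : ℕ+ => if m = 1 then (1 : ℝ) / 3 else 0) (j : ℕ+)) = 0 := by
      have hz : ∀ j : {j : ℕ+ // (2 : ℕ+) ≤ j},
          (fun m : ℕ+ => if m = 1 then (1 : ℝ) / 3 else 0) (j : ℕ+) = 0 := by
        intro j
        have : (j : ℕ+) ≠ 1 := by
          intro h
          have := j.2
          rw [h] at this
          exact absurd this (by decide)
        simp [this]
      rw [tsum_congr hz, tsum_zero]
    rw [Finset.sum_pair (by decide : (1 : ℕ+) ≠ 2)]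
    rw [hT1, hT2]
    norm_num
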